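/- Let h : ℝ → ℝ be continuously differentiable, and suppose there exist γ > 0 and ρ ∈ [0,1) such that h'(t) ≥ -γ · sign(h(t)) · |h(t)|^ρ for all t ≥ t₀. If h(t₀) ≥ 0, then h(t) ≥ 0 for all t ≥ t₀. -/
import Mathlib


/-- Forward invariance under the TV-FCBF differential inequality. -/
theorem stmt_0 (h : ℝ → ℝ) (t₀ γ ρ : ℝ)
    (hC1 : ContDiff ℝ 1 h) (hγ : 0 < γ) (hρ0 : 0 ≤ ρ) (hρ1 : ρ < 1)
    (hineq : ∀ t, t₀ ≤ t → deriv h t ≥ -γ * Real.sign (h t) * |h t| ^ ρ)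
    (h0 : 0 ≤ h t₀) :
    ∀ t, t₀ ≤ t → 0 ≤ h t := by
  intro t₁ ht₁
  by_contra hneg
  push_neg at hneg
  have hcont : Continuous h := hC1.continuous
  let S : Set ℝ := {t | t ∈ Set.Icc t₀ t₁ ∧ 0 ≤ h t}
  have hSne : S.Nonempty := ⟨t₀, ⟨le_refl _, ht₁⟩, h0⟩
  have hSbdd : BddAbove S := ⟨t₁, fun x hx => hx.1.2⟩
  have hSclosed : IsClosed S :=
    (isClosed_Icc.inter (isClosed_le continuous_const hcont) : IsClosed
      {t | t ∈ Set.Icc t₀ t₁ ∧ 0 ≤ h t})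
  let s := sSup S
  have hsS : s ∈ S := hSclosed.csSup_mem hSne hSbdd
  have hs0 : t₀ ≤ s := hsS.1.1
  have hst₁ : s ≤ t₁ := hsS.1.2
  have hhs : 0 ≤ h s := hsS.2
  have hslt : s < t₁ := lt_of_le_of_ne hst₁ (fun heq => absurd (heq ▸ hhs) (not_le.2 hneg))
  -- on (s, t₁], h < 0
  have hIoc : ∀ x ∈ Set.Ioc s t₁, h x < 0 := by
    intro x hx
    by_contra hge
    push_neg at hge
    have : x ∈ S := ⟨⟨hs0.trans hx.1.le, hx.2⟩, hge⟩
    exact absurd (le_csSup hSbdd this) (not_le.2 hx.1)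
  have hmono : StrictMonoOn h (Set.Icc s t₁) := by
    apply strictMonoOn_of_deriv_pos (convex_Icc s t₁) (hcont.continuousOn)
    intro x hx
    rw [interior_Icc] at hx
    have hxneg : h x < 0 := hIoc x ⟨hx.1, hx.2.le⟩
    have hsign : Real.sign (h x) = -1 := Real.sign_of_neg hxneg
    have habs : 0 < |h x| := abs_pos.2 (ne_of_lt hxneg)
    have := hineq x (hs0.trans hx.1.le)
    rw [hsign] at this
    have hpos : 0 < γ * |h x| ^ ρ :=
      mul_pos hγ (Real.rpow_pos_of_pos habs ρ)
    calc (0:ℝ) < γ * |h x| ^ ρ := hpos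
      _ = -γ * (-1) * |h x| ^ ρ := by ring
      _ ≤ deriv h x := this
  have := hmono (Set.left_mem_Icc.2 hst₁) (Set.right_mem_Icc.2 hst₁) hslt
  exact absurd (lt_trans (lt_of_le_of_lt hhs this) hneg) (lt_irrefl 0)
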